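/- In the common priority model, under the Reveal policy where each student observes his own lottery number, the strategy profile where each student i with π(i) in the k-th lottery block reports s_k first is a Nash equilibrium of the induced complete-information game (for the realized lottery), and it yields the assignment where every student is matched to his block school; moreover no student can obtain a better school by a unilateral deviation. -/

import Mathlib

open Classical in
/-- A student `i` is admitted when each student reports a single school
according to `r` and each school admits its `q s` highest-priority applicants
(smaller lottery number = higher priority): `i` is admitted iff the number of
applicants to his school with weakly better lottery numbers is at most the
capacity. -/
noncomputable def isAdmitted {n m : ℕ} (q : Fin m → ℕ) (π : Equiv.Perm (Fin n))
    (r : Fin n → Fin m) (i : Fin n) : Prop :=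
  (Finset.univ.filter (fun j : Fin n => r j = r i ∧ (π j : ℕ) ≤ (π i : ℕ))).card
    ≤ q (r i)

open Classical in
/-- Payoff: the utility of the reported school if admitted, 0 otherwise. -/
noncomputable def payoff {n m : ℕ} (q : Fin m → ℕ) (π : Equiv.Perm (Fin n))
    (u : Fin m → ℝ) (r : Fin n → Fin m) (i : Fin n) : ℝ :=
  if isAdmitted q π r i then u (r i) else 0

/-- In the common priority model under the Reveal policy, with
common strictly decreasing positive utilities, a bijective lottery `π` and
capacities summing to `n`, the strategy profile `σ` in which each student with
lottery number in the `k`-th block reports school `k` is a Nash equilibrium of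
the induced complete-information game: every student is admitted to his block
school, and no unilateral deviation yields a strictly higher payoff. -/
theorem reveal_block_strategy_nash
    (n m : ℕ) (q : Fin m → ℕ) (hq : ∑ s, q s = n)
    (π : Equiv.Perm (Fin n))
    (u : Fin m → ℝ) (hu : ∀ j k : Fin m, j < k → u k < u j)
    (hupos : ∀ k : Fin m, 0 < u k)
    (σ : Fin n → Fin m)
    (hσ : ∀ i : Fin n,
      ∑ y ∈ Finset.univ.filter (fun y => y < σ i), q y ≤ (π i : ℕ) ∧
      (π i : ℕ) < ∑ y ∈ Finset.univ.filter (fun y => y ≤ σ i), q y) :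
    (∀ i : Fin n, isAdmitted q π σ i) ∧
    (∀ i : Fin n, ∀ s : Fin m,
      payoff q π u (Function.update σ i s) i ≤ payoff q π u σ i) := by
  classical
  set L : Fin m → ℕ := fun s => ∑ y ∈ Finset.univ.filter (fun y => y < s), q y with hLdef
  have hLe : ∀ s : Fin m, ∑ y ∈ Finset.univ.filter (fun y => y ≤ s), q y = L s + q s := by
    intro s
    have hins : Finset.univ.filter (fun y => y ≤ s) =
        insert s (Finset.univ.filter (fun y => y < s)) := by
      ext y
      simp only [Finset.mem_insert, Finset.mem_filter, Finset.mem_univ, true_and,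
        Fin.lt_def, Fin.le_def, Fin.ext_iff]
      omega
    rw [hins, Finset.sum_insert (by simp)]
    simp [hLdef, Nat.add_comm]
  have hσ' : ∀ i : Fin n, L (σ i) ≤ (π i : ℕ) ∧ (π i : ℕ) < L (σ i) + q (σ i) := by
    intro i
    refine ⟨(hσ i).1, ?_⟩
    have := (hσ i).2
    rwa [hLe] at this
  have hmono : ∀ s t : Fin m, s < t → L s + q s ≤ L t := by
    intro s t hst
    rw [← hLe]
    apply Finset.sum_le_sum_of_subset
    intro y hy
    simp only [Finset.mem_filter, Finset.mem_univ, true_and] at hy ⊢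
    exact lt_of_le_of_lt hy hst
  have hLn : ∀ s : Fin m, L s + q s ≤ n := by
    intro s
    rw [← hLe, ← hq]
    exact Finset.sum_le_sum_of_subset (fun y _ => Finset.mem_univ y)
  -- exact count of students reporting s under σ
  have hcard : ∀ s : Fin m, (Finset.univ.filter (fun j => σ j = s)).card = q s := by
    intro s
    have : (Finset.univ.filter (fun j => σ j = s)).card
        = (Finset.Ico (L s) (L s + q s)).card := by
      apply Finset.card_bij (fun j _ => (π j : ℕ))
      · intro j hj
        simp only [Finset.mem_filter, Finset.mem_univ, true_and] at hj
        have h := hσ' j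
        rw [hj] at h
        simp [Finset.mem_Ico, h.1, h.2]
      · intro a _ b _ hab
        exact π.injective (Fin.ext hab)
      · intro t ht
        simp only [Finset.mem_Ico] at ht
        have htn : t < n := lt_of_lt_of_le ht.2 (hLn s)
        refine ⟨π.symm ⟨t, htn⟩, ?_, ?_⟩
        · simp only [Finset.mem_filter, Finset.mem_univ, true_and]
          set j := π.symm ⟨t, htn⟩ with hj
          have hπj : (π j : ℕ) = t := by simp [hj]
          have h := hσ' j
          rw [hπj] at h
          rcases lt_trichotomy (σ j) s with hlt | heq | hgt
          · exact absurd (le_trans (hmono _ _ hlt) ht.1) (not_le.mpr h.2)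
          · exact heq
          · exact absurd (le_trans (hmono _ _ hgt) h.1) (not_le.mpr ht.2)
        · simp
    rw [this, Nat.card_Ico]
    omega
  have hadm : ∀ i : Fin n, isAdmitted q π σ i := by
    intro i
    unfold isAdmitted
    have hsub : (Finset.univ.filter (fun j : Fin n => σ j = σ i ∧ (π j : ℕ) ≤ (π i : ℕ))).card
        ≤ (Finset.Icc (L (σ i)) ((π i : ℕ))).card := by
      apply Finset.card_le_card_of_injOn (fun j => (π j : ℕ))
      · intro j hj
        simp only [Finset.mem_coe, Finset.mem_filter, Finset.mem_univ, true_and] at hj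
        have h := hσ' j
        rw [hj.1] at h
        simp [Finset.mem_Icc, h.1, hj.2]
      · intro a _ b _ hab
        exact π.injective (Fin.ext hab)
    have := hσ' i
    rw [Nat.card_Icc] at hsub
    omega
  refine ⟨hadm, ?_⟩
  intro i s
  have hpay : payoff q π u σ i = u (σ i) := by
    unfold payoff
    rw [if_pos (hadm i)]
  rcases lt_trichotomy s (σ i) with hlt | heq | hgt
  · -- deviation downward: rejected
    have hrej : ¬ isAdmitted q π (Function.update σ i s) i := by
      unfold isAdmitted
      have hui : Function.update σ i s i = s := Function.update_self i s σ
      rw [hui]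
      have hne : σ i ≠ s := ne_of_gt hlt
      have hsub : insert i (Finset.univ.filter (fun j => σ j = s)) ⊆
          Finset.univ.filter (fun j : Fin n =>
            Function.update σ i s j = s ∧ (π j : ℕ) ≤ (π i : ℕ)) := by
        intro j hj
        rw [Finset.mem_insert] at hj
        simp only [Finset.mem_filter, Finset.mem_univ, true_and]
        rcases hj with rfl | hj
        · exact ⟨Function.update_self _ _ _, le_refl _⟩
        · simp only [Finset.mem_filter, Finset.mem_univ, true_and] at hj
          have hji : j ≠ i := by
            rintro rfl
            exact hne hj
          constructor
          · rw [Function.update_of_ne hji, hj]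
          · have h := hσ' j
            rw [hj] at h
            have := le_trans (hmono _ _ hlt) (hσ' i).1
            omega
      have hcard2 : q s + 1 ≤ (Finset.univ.filter (fun j : Fin n =>
            Function.update σ i s j = s ∧ (π j : ℕ) ≤ (π i : ℕ))).card := by
        have h1 := Finset.card_le_card hsub
        rw [Finset.card_insert_of_notMem (by
          simp only [Finset.mem_filter, Finset.mem_univ, true_and]
          exact fun h => hne h), hcard s] at h1
        omega
      omega
    unfold payoff
    rw [if_neg hrej, if_pos (hadm i)]
    exact le_of_lt (hupos (σ i))
  · subst heq
    rw [Function.update_eq_self]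
  · -- deviation upward: worse school even if admitted
    unfold payoff
    rw [if_pos (hadm i)]
    have hui : Function.update σ i s i = s := Function.update_self i s σ
    rw [hui]
    split_ifs
    · exact le_of_lt (hu (σ i) s hgt)
    · exact le_of_lt (hupos (σ i))
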